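/- The group S_4 × ℤ/2ℤ (the direct product of the symmetric group on 4 letters with the cyclic group of order 2) admits a disjoint pair (A_1, A_2) of spherical systems of generators with A_1 of type [2,2,2,2,2,2,2,2] and A_2 of type [2,4,6]. -/

import Mathlib

set_option maxRecDepth 100000
set_option maxHeartbeats 1000000


/-- `A` is a spherical system of generators of `G` of type `T = [m₁, ..., m_r]`:
the entries of `A` generate `G`, their product is `1`, and the list of orders of the
entries of `A` is a permutation of `T`. -/
def SphericalSystem {G : Type*} [Group G] (A : List G) (T : List ℕ) : Prop :=
  Subgroup.closure {g : G | g ∈ A} = ⊤ ∧ A.prod = 1 ∧ (A.map orderOf).Perm T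

/-- The stabilizer set `Σ(A) = ⋃_{h ∈ G} ⋃_{j ∈ ℤ} ⋃ᵢ {h gᵢʲ h⁻¹}` of a tuple `A`. -/
def SigmaSet {G : Type*} [Group G] (A : List G) : Set G :=
  {x | ∃ h : G, ∃ g ∈ A, ∃ j : ℤ, x = h * g ^ j * h⁻¹}

namespace S4Z2Aux

abbrev G := Equiv.Perm (Fin 4) × Multiplicative (ZMod 2)

def z : Multiplicative (ZMod 2) := Multiplicative.ofAdd 1
def c4 : Equiv.Perm (Fin 4) := finRotate 4

def p : G := (Equiv.swap 0 1, z)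
def q : G := (Equiv.swap 1 2, z)
def r : G := (Equiv.swap 2 3, z)
def s : G := (Equiv.swap 0 1 * Equiv.swap 2 3, z)

def a : G := (Equiv.swap 0 3, 1)
def b : G := (c4, z)
def c : G := (c4⁻¹ * Equiv.swap 0 3, z)

def A1 : List G := [p, p, q, q, r, r, s, s]
def A2 : List G := [a, b, c]

/-- A conjugation-invariant predicate separating `Σ(A₁) \ {1}` from `Σ(A₂)`. -/
abbrev Kp (x : G) : Prop := x.2 = z ∧ x.1 * x.1 = 1 ∧ x.1 ≠ 1

lemma Kp_conj (h x : G) : Kp (h * x * h⁻¹) ↔ Kp x := by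
  obtain ⟨h1, h2⟩ := h
  obtain ⟨x1, x2⟩ := x
  have e2 : h2 * x2 * h2⁻¹ = x2 := by
    rw [mul_comm h2 x2, mul_assoc, mul_inv_cancel, mul_one]
  have e1 : h1 * x1 * h1⁻¹ * (h1 * x1 * h1⁻¹) = h1 * (x1 * x1) * h1⁻¹ := by group
  simp only [Kp, Prod.mk_mul_mk, Prod.inv_mk, e2, e1]
  simp only [ne_eq, conj_eq_one_iff]

lemma sigmaSet_eq_of_pow_eq_one {H : Type*} [Group H] (A : List H) (k : ℕ) (hk : 0 < k)
    (hA : ∀ g ∈ A, g ^ k = 1) :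
    SigmaSet A =
      {x | ∃ h : H, ∃ g ∈ A.flatMap (fun g => (List.range k).map (g ^ ·)), x = h * g * h⁻¹} := by
  ext x
  simp only [SigmaSet, Set.mem_setOf_eq]
  constructor
  · rintro ⟨h, g, hg, j, rfl⟩
    have h1 : 0 ≤ j % (k : ℤ) := Int.emod_nonneg j (by exact_mod_cast hk.ne')
    have h2 : j % (k : ℤ) < k := Int.emod_lt_of_pos j (by exact_mod_cast hk)
    refine ⟨h, g ^ (j % (k : ℤ)).toNat, ?_, ?_⟩
    · exact List.mem_flatMap.mpr ⟨g, hg, List.mem_map.mpr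
        ⟨(j % (k : ℤ)).toNat, List.mem_range.mpr (by omega), rfl⟩⟩
    · have hj : g ^ j = g ^ ((j % (k : ℤ)).toNat : ℕ) := by
        conv_lhs => rw [← Int.mul_ediv_add_emod j (k : ℤ)]
        rw [zpow_add, zpow_mul, zpow_natCast, hA g hg, one_zpow, one_mul,
          ← zpow_natCast, Int.toNat_of_nonneg h1]
      rw [hj]
  · rintro ⟨h, g', hg', rfl⟩
    obtain ⟨g, hg, hmap⟩ := List.mem_flatMap.mp hg'
    obtain ⟨n, -, rfl⟩ := List.mem_map.mp hmap
    exact ⟨h, g, hg, (n : ℤ), by rw [zpow_natCast]⟩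

lemma orderOf_eq {g : G} {k : ℕ} (hk : 0 < k) (h1 : g ^ k = 1)
    (h2 : ∀ m, m < k → 0 < m → g ^ m ≠ 1) : orderOf g = k :=
  (orderOf_eq_iff hk).mpr ⟨h1, h2⟩

lemma top_of {K : Subgroup G} (h1 : ((c4 : Equiv.Perm (Fin 4)), (1 : Multiplicative (ZMod 2))) ∈ K)
    (h2 : ((Equiv.swap 0 1 : Equiv.Perm (Fin 4)), (1 : Multiplicative (ZMod 2))) ∈ K)
    (h3 : ((1 : Equiv.Perm (Fin 4)), z) ∈ K) : K = ⊤ := by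
  have hrange : ∀ g : Equiv.Perm (Fin 4), (g, (1 : Multiplicative (ZMod 2))) ∈ K := by
    have htop : Subgroup.closure ({c4, Equiv.swap 0 (c4 0)} : Set (Equiv.Perm (Fin 4))) = ⊤ :=
      Equiv.Perm.closure_cycle_adjacent_swap isCycle_finRotate support_finRotate 0
    set φ : Equiv.Perm (Fin 4) →* G := MonoidHom.inl _ _
    have hmap : Subgroup.map φ ⊤ ≤ K := by
      rw [← htop, MonoidHom.map_closure]
      apply (Subgroup.closure_le _).mpr
      rintro y ⟨w, hw, rfl⟩
      rcases hw with rfl | hw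
      · exact h1
      · rw [Set.mem_singleton_iff] at hw
        subst hw
        have : Equiv.swap (0 : Fin 4) (c4 0) = Equiv.swap 0 1 := by decide
        rw [this]; exact h2
    intro g
    exact hmap ⟨g, trivial, rfl⟩
  rw [eq_top_iff]
  rintro ⟨g, ε⟩ -
  rcases (by decide : ∀ e : Multiplicative (ZMod 2), e = 1 ∨ e = z) ε with rfl | rfl
  · exact hrange g
  · have : ((g, z) : G) = (g, 1) * ((1 : Equiv.Perm (Fin 4)), z) := by
      ext <;> simp
    rw [this]
    exact K.mul_mem (hrange g) h3

end S4Z2Aux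

open S4Z2Aux in
/-- The group `S₄ × ℤ/2ℤ` admits a disjoint pair of spherical systems of generators of
types `[2,2,2,2,2,2,2,2]` and `[2,4,6]`. -/
theorem s4_x_z2_disjoint_pair_2e8_246 :
    ∃ A₁ A₂ : List (Equiv.Perm (Fin 4) × Multiplicative (ZMod 2)),
      SphericalSystem A₁ [2, 2, 2, 2, 2, 2, 2, 2] ∧ SphericalSystem A₂ [2, 4, 6] ∧
        SigmaSet A₁ ∩ SigmaSet A₂ = {1} := by
  refine ⟨A1, A2, ⟨?_, ?_, ?_⟩, ⟨?_, ?_, ?_⟩, ?_⟩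
  · -- closure of A1 is ⊤
    set K := Subgroup.closure {g : G | g ∈ A1} with hK
    have hp : p ∈ K := Subgroup.subset_closure (by simp [A1])
    have hq : q ∈ K := Subgroup.subset_closure (by simp [A1])
    have hr : r ∈ K := Subgroup.subset_closure (by simp [A1])
    have hs : s ∈ K := Subgroup.subset_closure (by simp [A1])
    have h3 : ((1 : Equiv.Perm (Fin 4)), z) ∈ K := by
      have := K.mul_mem (K.mul_mem hr hp) hs
      rwa [show r * p * s = ((1 : Equiv.Perm (Fin 4)), z) from by decide] at this
    have h2 : ((Equiv.swap 0 1 : Equiv.Perm (Fin 4)), (1 : Multiplicative (ZMod 2))) ∈ K := by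
      have := K.mul_mem hp h3
      rwa [show p * ((1 : Equiv.Perm (Fin 4)), z) =
        ((Equiv.swap 0 1 : Equiv.Perm (Fin 4)), (1 : Multiplicative (ZMod 2))) from by decide]
        at this
    have h1 : ((c4 : Equiv.Perm (Fin 4)), (1 : Multiplicative (ZMod 2))) ∈ K := by
      have := K.mul_mem (K.mul_mem (K.mul_mem hp hq) hr) h3
      rwa [show p * q * r * ((1 : Equiv.Perm (Fin 4)), z) =
        ((c4 : Equiv.Perm (Fin 4)), (1 : Multiplicative (ZMod 2))) from by decide] at this
    exact top_of h1 h2 h3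
  · decide
  · -- orders of A1
    have hp : orderOf p = 2 := orderOf_eq (by norm_num) (by decide) (by decide)
    have hq : orderOf q = 2 := orderOf_eq (by norm_num) (by decide) (by decide)
    have hr : orderOf r = 2 := orderOf_eq (by norm_num) (by decide) (by decide)
    have hs : orderOf s = 2 := orderOf_eq (by norm_num) (by decide) (by decide)
    have : A1.map orderOf = [2, 2, 2, 2, 2, 2, 2, 2] := by
      simp [A1, hp, hq, hr, hs]
    rw [this]
  · -- closure of A2 is ⊤
    set K := Subgroup.closure {g : G | g ∈ A2} with hK
    have ha : a ∈ K := Subgroup.subset_closure (by simp [A2])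
    have hb : b ∈ K := Subgroup.subset_closure (by simp [A2])
    have hc : c ∈ K := Subgroup.subset_closure (by simp [A2])
    have h3 : ((1 : Equiv.Perm (Fin 4)), z) ∈ K := by
      have := K.mul_mem (K.mul_mem hc hc) hc
      rwa [show c * c * c = ((1 : Equiv.Perm (Fin 4)), z) from by decide] at this
    have h1 : ((c4 : Equiv.Perm (Fin 4)), (1 : Multiplicative (ZMod 2))) ∈ K := by
      have := K.mul_mem hb h3
      rwa [show b * ((1 : Equiv.Perm (Fin 4)), z) =
        ((c4 : Equiv.Perm (Fin 4)), (1 : Multiplicative (ZMod 2))) from by decide] at this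
    have h2 : ((Equiv.swap 0 1 : Equiv.Perm (Fin 4)), (1 : Multiplicative (ZMod 2))) ∈ K := by
      have := K.mul_mem (K.mul_mem hb ha) (K.inv_mem hb)
      rwa [show b * a * b⁻¹ =
        ((Equiv.swap 0 1 : Equiv.Perm (Fin 4)), (1 : Multiplicative (ZMod 2))) from by decide]
        at this
    exact top_of h1 h2 h3
  · decide
  · -- orders of A2
    have ha : orderOf a = 2 := orderOf_eq (by norm_num) (by decide) (by decide)
    have hb : orderOf b = 4 := orderOf_eq (by norm_num) (by decide) (by decide)
    have hc : orderOf c = 6 := orderOf_eq (by norm_num) (by decide) (by decide)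
    have : A2.map orderOf = [2, 4, 6] := by simp [A2, ha, hb, hc]
    rw [this]
  · -- disjointness
    rw [sigmaSet_eq_of_pow_eq_one A1 2 (by norm_num) (by decide),
      sigmaSet_eq_of_pow_eq_one A2 12 (by norm_num) (by decide)]
    have c1 : ∀ g ∈ A1.flatMap (fun g => (List.range 2).map (g ^ ·)), g = 1 ∨ Kp g := by decide
    have c2 : ∀ g ∈ A2.flatMap (fun g => (List.range 12).map (g ^ ·)), ¬ Kp g := by decide
    ext x
    simp only [Set.mem_inter_iff, Set.mem_setOf_eq, Set.mem_singleton_iff]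
    constructor
    · rintro ⟨⟨h1, g1, hg1, rfl⟩, ⟨h2, g2, hg2, hx2⟩⟩
      rcases c1 g1 hg1 with rfl | hK
      · group
      · exfalso
        have hK1 : Kp (h1 * g1 * h1⁻¹) := (Kp_conj h1 g1).mpr hK
        rw [hx2] at hK1
        exact c2 g2 hg2 ((Kp_conj h2 g2).mp hK1)
    · rintro rfl
      exact ⟨⟨1, 1, by decide, by group⟩, ⟨1, 1, by decide, by group⟩⟩
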